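/- Let C be a finite set of m parties, c_1 ∈ C, and A₋₁ ⊆ C∖{c_1} with |A₋₁| = a, and let k_1, k_A be integers with 0 ≤ k_1 ≤ m−1. There exists a linear order O on C with Borda(O,c_1) = k_1 and Borda(O,A₋₁) = k_A if and only if there exist nonnegative integers ℓ↓, ℓ↑ such that: ℓ↓ + ℓ↑ = a; ℓ↓ ≤ k_1; ℓ↑ ≤ m−1−k_1; and ℓ↓(ℓ↓−1)/2 + ℓ↑·k_1 + ℓ↑(ℓ↑+1)/2 ≤ k_A ≤ ℓ↓·k_1 − ℓ↓(ℓ↓+1)/2 + ℓ↑·m − ℓ↑(ℓ↑+1)/2. -/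

import Mathlib

open Finset

namespace Stmt6

/-- The Borda score of party `c` under the linear order `O`:
`Borda(O,c) = m − pos(O,c)`, where `pos(O,c) = (O c).val + 1`. -/
def borda {C : Type*} [Fintype C] (O : C ≃ Fin (Fintype.card C)) (c : C) : ℕ :=
  Fintype.card C - 1 - (O c).val

/-- The total Borda score of a set `S` of parties. -/
def bordaSum {C : Type*} [Fintype C] (O : C ≃ Fin (Fintype.card C)) (S : Finset C) : ℕ :=
  ∑ c ∈ S, borda O c


lemma gauss (n : ℕ) : 2 * (∑ i ∈ Finset.range n, i) + n = n * n := by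
  induction n with
  | zero => simp
  | succ n ih => rw [Finset.sum_range_succ]; ring_nf; ring_nf at ih; omega

lemma sum_range_le' : ∀ (n : ℕ) (s : Finset ℕ), s.card = n →
    ∑ i ∈ Finset.range n, i ≤ ∑ x ∈ s, x := by
  intro n
  induction n with
  | zero => intro s _; simp
  | succ n ih =>
    intro s hn
    have hne : s.Nonempty := by rw [← Finset.card_pos, hn]; omega
    have hMem := s.max'_mem hne
    set M := s.max' hne with hM
    have hcard : (s.erase M).card = n := by rw [Finset.card_erase_of_mem hMem, hn]; omega
    have hsub : s.erase M ⊆ Finset.range M := by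
      intro x hx
      rcases Finset.mem_erase.1 hx with ⟨hne', hx'⟩
      exact Finset.mem_range.2 (lt_of_le_of_ne (s.le_max' x hx') hne')
    have hnM : n ≤ M := by
      have := Finset.card_le_card hsub
      rw [hcard, Finset.card_range] at this; exact this
    have hIH := ih (s.erase M) hcard
    have hsum : M + ∑ x ∈ s.erase M, x = ∑ x ∈ s, x := Finset.add_sum_erase s id hMem
    rw [Finset.sum_range_succ]
    omega

lemma lower_bound (s : Finset ℕ) (L : ℕ) (h : ∀ x ∈ s, L ≤ x) :
    s.card * s.card + 2 * (s.card * L) ≤ 2 * (∑ x ∈ s, x) + s.card := by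
  have hinj : Set.InjOn (fun x => x - L) s := by
    intro x hx y hy hxy
    have := h x hx; have := h y hy; simp only at hxy; omega
  have hcard : (s.image fun x => x - L).card = s.card := Finset.card_image_of_injOn hinj
  have h1 := sum_range_le' _ (s.image fun x => x - L) rfl
  rw [hcard, Finset.sum_image hinj] at h1
  have h2 := gauss s.card
  have h3 : ∑ x ∈ s, x = (∑ x ∈ s, (x - L)) + s.card * L := by
    have : ∑ x ∈ s, x = ∑ x ∈ s, ((x - L) + L) :=
      Finset.sum_congr rfl fun x hx => by have := h x hx; omega
    rw [this, Finset.sum_add_distrib, Finset.sum_const, smul_eq_mul]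
  set A := ∑ i ∈ Finset.range s.card, i
  set B := ∑ x ∈ s, (x - L)
  set Cs := ∑ x ∈ s, x
  set n := s.card
  set P := n * L
  set Q := n * n
  omega

lemma upper_bound (s : Finset ℕ) (K : ℕ) (h : ∀ x ∈ s, x < K) :
    2 * (∑ x ∈ s, x) + s.card * s.card + s.card ≤ 2 * (s.card * K) := by
  have hinj : Set.InjOn (fun x => K - 1 - x) s := by
    intro x hx y hy hxy
    have := h x hx; have := h y hy; simp only at hxy; omega
  have hcard : (s.image fun x => K - 1 - x).card = s.card := Finset.card_image_of_injOn hinj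
  have h1 := lower_bound (s.image fun x => K - 1 - x) 0 (fun x _ => Nat.zero_le x)
  rw [hcard, Finset.sum_image hinj] at h1
  have h3 : (∑ x ∈ s, (K - 1 - x)) + ∑ x ∈ s, x = s.card * (K - 1) := by
    rw [← Finset.sum_add_distrib]
    have : ∑ x ∈ s, (K - 1 - x + x) = ∑ x ∈ s, (K - 1) :=
      Finset.sum_congr rfl fun x hx => by have := h x hx; omega
    rw [this, Finset.sum_const, smul_eq_mul]
  have h4 : s.card * (K - 1) + s.card = s.card * K := by
    rcases Nat.eq_zero_or_pos s.card with h0 | h0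
    · rcases Finset.card_eq_zero.mp h0 with rfl; simp
    · have hK : 1 ≤ K := by
        obtain ⟨x, hx⟩ := Finset.card_pos.mp h0
        have := h x hx; omega
      rcases K with _ | K'
      · omega
      · simp [Nat.mul_succ]
  set A := ∑ x ∈ s, (K - 1 - x)
  set B := ∑ x ∈ s, x
  set n := s.card
  set P := n * K
  set Q := n * n
  set R := n * (K - 1)
  omega




/-- construct an `n`-element subset of `range K` with prescribed sum `s`. -/
lemma construct : ∀ (n K s : ℕ), n ≤ K → n * n ≤ 2 * s + n →
    2 * s + n * n + n ≤ 2 * (n * K) →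
    ∃ t : Finset ℕ, t ⊆ Finset.range K ∧ t.card = n ∧ ∑ x ∈ t, x = s := by
  intro n
  induction n with
  | zero =>
    intro K s _ _ h2
    have : s = 0 := by omega
    exact ⟨∅, by simp [this]⟩
  | succ n ih =>
    intro K s hnK h1 h2
    obtain ⟨b, hb⟩ : ∃ b, 2 * b + n = n * n := ⟨_, gauss n⟩
    have e1 : (n+1)*(n+1) = n*n + 2*n + 1 := by ring
    have e2 : (n+1)*K = n*K + K := by ring
    -- s ≥ b + n
    have hsb : b + n ≤ s := by
      omega
    obtain ⟨d, hd⟩ : ∃ d, s = b + n + d := ⟨s - b - n, by omega⟩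
    rcases K with _ | K'
    · omega
    by_cases hc : n + d ≤ K'
    · -- M = n + d = s - b;  take t = insert M t'
      have hM : n ≤ n + d := Nat.le_add_right n d
      have hnm : n * n ≤ n * (n + d) := Nat.mul_le_mul_left n hM
      obtain ⟨t', ht'sub, ht'card, ht'sum⟩ := ih (n + d) b hM (by omega) (by omega)
      refine ⟨insert (n + d) t', ?_, ?_, ?_⟩
      · intro x hx
        rcases Finset.mem_insert.mp hx with rfl | hx
        · exact Finset.mem_range.mpr (by omega)
        · exact Finset.mem_range.mpr (by have := Finset.mem_range.mp (ht'sub hx); omega)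
      · rw [Finset.card_insert_of_notMem (fun hmem => by
          have := Finset.mem_range.mp (ht'sub hmem); omega), ht'card]
      · rw [Finset.sum_insert (fun hmem => by
          have := Finset.mem_range.mp (ht'sub hmem); omega), ht'sum]
        omega
    · -- M = K'
      have hM : n ≤ K' := by omega
      have e3 : n * K' + n = n * (K' + 1) := by ring
      have hs' : s - K' = s - K' := rfl
      obtain ⟨s', hsK⟩ : ∃ s', s = K' + s' := ⟨s - K', by omega⟩
      obtain ⟨t', ht'sub, ht'card, ht'sum⟩ := ih K' s' hM (by omega) (by omega)
      refine ⟨insert K' t', ?_, ?_, ?_⟩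
      · intro x hx
        rcases Finset.mem_insert.mp hx with rfl | hx
        · exact Finset.mem_range.mpr (by omega)
        · exact Finset.mem_range.mpr (by have := Finset.mem_range.mp (ht'sub hx); omega)
      · rw [Finset.card_insert_of_notMem (fun hmem => by
          have := Finset.mem_range.mp (ht'sub hmem); omega), ht'card]
      · rw [Finset.sum_insert (fun hmem => by
          have := Finset.mem_range.mp (ht'sub hmem); omega), ht'sum]
        omega

/-- shifted version: `n`-element subset of `[L, K)` with prescribed sum. -/
lemma construct' (n L K s : ℕ) (hnK : n + L ≤ K) (h1 : n * n + 2 * (n * L) ≤ 2 * s + n)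
    (h2 : 2 * s + n * n + n ≤ 2 * (n * K)) :
    ∃ t : Finset ℕ, (∀ x ∈ t, L ≤ x ∧ x < K) ∧ t.card = n ∧ ∑ x ∈ t, x = s := by
  have hLK : L ≤ K := by omega
  have e : n * (K - L) + n * L = n * K := by
    rw [← Nat.mul_add, Nat.sub_add_cancel hLK]
  have hnn : n ≤ n * n := by
    rcases Nat.eq_zero_or_pos n with rfl | hp
    · omega
    · exact Nat.le_mul_of_pos_left n hp
  have hsL : n * L ≤ s := by omega
  obtain ⟨s', hs'⟩ : ∃ s', s = n * L + s' := ⟨s - n * L, by omega⟩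
  obtain ⟨t0, ht0sub, ht0card, ht0sum⟩ := construct n (K - L) s' (by omega) (by omega) (by omega)
  refine ⟨t0.image (· + L), ?_, ?_, ?_⟩
  · intro x hx
    obtain ⟨y, hy, rfl⟩ := Finset.mem_image.mp hx
    have := Finset.mem_range.mp (ht0sub hy)
    omega
  · rw [Finset.card_image_of_injective _ (add_left_injective L), ht0card]
  · rw [Finset.sum_image (fun x _ y _ h => by omega), Finset.sum_add_distrib,
      Finset.sum_const, smul_eq_mul, ht0sum, ht0card]
    omega

lemma sum_attachFin {n : ℕ} (s : Finset ℕ) (h : ∀ a ∈ s, a < n) (g : ℕ → ℕ) :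
    ∑ p ∈ s.attachFin h, g p.val = ∑ w ∈ s, g w := by
  refine Finset.sum_bij (fun p _ => p.val) ?_ ?_ ?_ ?_
  · intro p hp; exact (Finset.mem_attachFin h).mp hp
  · intro p _ q _ hpq; exact Fin.val_injective hpq
  · intro w hw; exact ⟨⟨w, h w hw⟩, (Finset.mem_attachFin h).mpr hw, rfl⟩
  · intro p _; rfl

theorem fwd {C : Type*} [Fintype C] [DecidableEq C] (c1 : C) (Am1 : Finset C)
    (hc1 : c1 ∉ Am1) (a : ℕ) (hA : Am1.card = a)
    (k1 : ℕ) (kA : ℤ) (hk1 : k1 ≤ Fintype.card C - 1) :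
    (∃ O : C ≃ Fin (Fintype.card C),
        borda O c1 = k1 ∧ (bordaSum O Am1 : ℤ) = kA) →
      (∃ ld lu : ℕ, ld + lu = a ∧ ld ≤ k1 ∧ lu ≤ Fintype.card C - 1 - k1 ∧
        ((ld : ℤ) * ((ld : ℤ) - 1)) / 2 + (lu : ℤ) * (k1 : ℤ) +
            ((lu : ℤ) * ((lu : ℤ) + 1)) / 2 ≤ kA ∧
        kA ≤ (ld : ℤ) * (k1 : ℤ) - ((ld : ℤ) * ((ld : ℤ) + 1)) / 2 +
            (lu : ℤ) * (Fintype.card C : ℤ) - ((lu : ℤ) * ((lu : ℤ) + 1)) / 2) := by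
  classical
  set m := Fintype.card C with hm
  have hm1 : 1 ≤ m := Fintype.card_pos_iff.mpr ⟨c1⟩
  rintro ⟨O, hb1, hbA⟩
  have hval : ∀ c : C, (O c).val ≤ m - 1 := fun c => by have := (O c).isLt; omega
  have hble : ∀ c : C, borda O c ≤ m - 1 := fun c => Nat.sub_le _ _
  have hinj : Function.Injective (borda O) := by
    intro x y hxy
    have hx := hval x; have hy := hval y
    unfold borda at hxy
    exact O.injective (Fin.val_injective (by omega))
  set B := Am1.filter (fun c => borda O c < k1) with hB
  set U := Am1.filter (fun c => ¬ borda O c < k1) with hU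
  set ld := B.card with hld
  set lu := U.card with hlu
  have hcards : ld + lu = a := by
    rw [hld, hlu, hB, hU, Finset.card_filter_add_card_filter_not, hA]
  have hinjB : Set.InjOn (borda O) B := fun x _ y _ h => hinj h
  have hinjU : Set.InjOn (borda O) U := fun x _ y _ h => hinj h
  set sB := B.image (borda O) with hsB
  set sU := U.image (borda O) with hsU
  have hcardB : sB.card = ld := Finset.card_image_of_injOn hinjB
  have hcardU : sU.card = lu := Finset.card_image_of_injOn hinjU
  have hmemB : ∀ x ∈ sB, x < k1 := by
    intro x hx
    obtain ⟨c, hc, rfl⟩ := Finset.mem_image.mp hx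
    exact (Finset.mem_filter.mp hc).2
  have hmemU : ∀ x ∈ sU, k1 + 1 ≤ x ∧ x < m := by
    intro x hx
    obtain ⟨c, hc, rfl⟩ := Finset.mem_image.mp hx
    obtain ⟨hcA, hcge⟩ := Finset.mem_filter.mp hc
    have hne : borda O c ≠ k1 := by
      intro he
      exact hc1 (by rw [← hinj (he.trans hb1.symm)]; exact hcA)
    have := hble c
    omega
  have hldk1 : ld ≤ k1 := by
    have hsub : sB ⊆ Finset.range k1 := fun x hx => Finset.mem_range.mpr (hmemB x hx)
    have := Finset.card_le_card hsub
    rw [hcardB, Finset.card_range] at this; exact this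
  have hlum : lu ≤ m - 1 - k1 := by
    have hsub : sU ⊆ Finset.Ico (k1 + 1) m := fun x hx => by
      have := hmemU x hx; exact Finset.mem_Ico.mpr this
    have := Finset.card_le_card hsub
    rw [hcardU, Nat.card_Ico] at this; omega
  refine ⟨ld, lu, hcards, hldk1, hlum, ?_, ?_⟩ <;>
  · have hBl := lower_bound sB 0 (fun x _ => Nat.zero_le x)
    have hBu := upper_bound sB k1 hmemB
    have hUl := lower_bound sU (k1 + 1) (fun x hx => (hmemU x hx).1)
    have hUu := upper_bound sU m (fun x hx => (hmemU x hx).2)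
    rw [hcardB] at hBl hBu
    rw [hcardU] at hUl hUu
    have hsumB : ∑ x ∈ sB, x = ∑ c ∈ B, borda O c := Finset.sum_image hinjB
    have hsumU : ∑ x ∈ sU, x = ∑ c ∈ U, borda O c := Finset.sum_image hinjU
    have hsplit : (∑ c ∈ B, borda O c) + ∑ c ∈ U, borda O c = bordaSum O Am1 := by
      rw [hB, hU, bordaSum]
      exact Finset.sum_filter_add_sum_filter_not _ _ _
    have hkAeq : ((∑ x ∈ sB, x : ℕ) : ℤ) + ((∑ x ∈ sU, x : ℕ) : ℤ) = kA := by
      rw [← hbA]; push_cast [hsumB, hsumU, ← hsplit]; ring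
    obtain ⟨q1, hq1⟩ : ∃ q : ℤ, 2 * q = (ld : ℤ) * ((ld : ℤ) - 1) := by
      obtain ⟨q, hq⟩ := Int.even_mul_succ_self ((ld : ℤ) - 1)
      exact ⟨q, by ring_nf; ring_nf at hq; linarith⟩
    obtain ⟨q2, hq2⟩ : ∃ q : ℤ, 2 * q = (lu : ℤ) * ((lu : ℤ) + 1) := by
      obtain ⟨q, hq⟩ := Int.even_mul_succ_self (lu : ℤ)
      exact ⟨q, by linarith⟩
    obtain ⟨q3, hq3⟩ : ∃ q : ℤ, 2 * q = (ld : ℤ) * ((ld : ℤ) + 1) := by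
      obtain ⟨q, hq⟩ := Int.even_mul_succ_self (ld : ℤ)
      exact ⟨q, by linarith⟩
    have hd1 : ((ld : ℤ) * ((ld : ℤ) - 1)) / 2 = q1 := by
      rw [← hq1]; exact Int.mul_ediv_cancel_left _ two_ne_zero
    have hd2 : ((lu : ℤ) * ((lu : ℤ) + 1)) / 2 = q2 := by
      rw [← hq2]; exact Int.mul_ediv_cancel_left _ two_ne_zero
    have hd3 : ((ld : ℤ) * ((ld : ℤ) + 1)) / 2 = q3 := by
      rw [← hq3]; exact Int.mul_ediv_cancel_left _ two_ne_zero
    zify at hBl hBu hUl hUu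
    push_cast at hkAeq
    try rw [← hm]
    rw [hd2]
    try rw [hd1]
    try rw [hd3]
    linarith [hq1, hq2, hq3, hBl, hBu, hUl, hUu, hkAeq]
set_option maxHeartbeats 2000000 in
theorem bwd {C : Type*} [Fintype C] [DecidableEq C] (c1 : C) (Am1 : Finset C)
    (hc1 : c1 ∉ Am1) (a : ℕ) (hA : Am1.card = a)
    (k1 : ℕ) (kA : ℤ) (hk1 : k1 ≤ Fintype.card C - 1) :
      (∃ ld lu : ℕ, ld + lu = a ∧ ld ≤ k1 ∧ lu ≤ Fintype.card C - 1 - k1 ∧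
        ((ld : ℤ) * ((ld : ℤ) - 1)) / 2 + (lu : ℤ) * (k1 : ℤ) +
            ((lu : ℤ) * ((lu : ℤ) + 1)) / 2 ≤ kA ∧
        kA ≤ (ld : ℤ) * (k1 : ℤ) - ((ld : ℤ) * ((ld : ℤ) + 1)) / 2 +
            (lu : ℤ) * (Fintype.card C : ℤ) - ((lu : ℤ) * ((lu : ℤ) + 1)) / 2) →
    (∃ O : C ≃ Fin (Fintype.card C),
        borda O c1 = k1 ∧ (bordaSum O Am1 : ℤ) = kA) := by
  classical
  set m := Fintype.card C with hm
  have hm1 : 1 ≤ m := Fintype.card_pos_iff.mpr ⟨c1⟩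
  rintro ⟨ld, lu, hsum, hldk1, hlum, hlow, hhigh⟩
  rw [← hm] at hhigh
  -- replace the divisions by exact halves
  obtain ⟨q1, hq1⟩ : ∃ q : ℤ, 2 * q = (ld : ℤ) * ((ld : ℤ) - 1) := by
    obtain ⟨q, hq⟩ := Int.even_mul_succ_self ((ld : ℤ) - 1)
    exact ⟨q, by ring_nf; ring_nf at hq; linarith⟩
  obtain ⟨q2, hq2⟩ : ∃ q : ℤ, 2 * q = (lu : ℤ) * ((lu : ℤ) + 1) := by
    obtain ⟨q, hq⟩ := Int.even_mul_succ_self (lu : ℤ)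
    exact ⟨q, by linarith⟩
  obtain ⟨q3, hq3⟩ : ∃ q : ℤ, 2 * q = (ld : ℤ) * ((ld : ℤ) + 1) := by
    obtain ⟨q, hq⟩ := Int.even_mul_succ_self (ld : ℤ)
    exact ⟨q, by linarith⟩
  rw [show ((ld : ℤ) * ((ld : ℤ) - 1)) / 2 = q1 by
        rw [← hq1]; exact Int.mul_ediv_cancel_left _ two_ne_zero,
      show ((lu : ℤ) * ((lu : ℤ) + 1)) / 2 = q2 by
        rw [← hq2]; exact Int.mul_ediv_cancel_left _ two_ne_zero] at hlow
  rw [show ((ld : ℤ) * ((ld : ℤ) + 1)) / 2 = q3 by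
        rw [← hq3]; exact Int.mul_ediv_cancel_left _ two_ne_zero,
      show ((lu : ℤ) * ((lu : ℤ) + 1)) / 2 = q2 by
        rw [← hq2]; exact Int.mul_ediv_cancel_left _ two_ne_zero] at hhigh
  -- choose the two target sums
  set sBZ : ℤ := min ((ld : ℤ) * k1 - q3) (kA - ((lu : ℤ) * k1 + q2)) with hsBZ
  set sUZ : ℤ := kA - sBZ with hsUZ
  have hA1 : (ld : ℤ) * ld ≤ (ld : ℤ) * k1 :=
    mul_le_mul_of_nonneg_left (by exact_mod_cast hldk1) (by positivity)
  have hA2 : (lu : ℤ) * ((lu : ℤ) + 1 + k1) ≤ (lu : ℤ) * m := by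
    apply mul_le_mul_of_nonneg_left _ (by positivity)
    have : lu + 1 + k1 ≤ m := by omega
    exact_mod_cast this
  have hBlo : q1 ≤ sBZ := le_min (by linarith) (by linarith)
  have hBhi : sBZ ≤ (ld : ℤ) * k1 - q3 := min_le_left _ _
  have hUlo : (lu : ℤ) * k1 + q2 ≤ sUZ := by
    have := min_le_right ((ld : ℤ) * k1 - q3) (kA - ((lu : ℤ) * k1 + q2))
    rw [hsUZ]; linarith
  have hUhi : sUZ ≤ (lu : ℤ) * m - q2 := by
    rcases min_cases ((ld : ℤ) * k1 - q3) (kA - ((lu : ℤ) * k1 + q2)) with ⟨he, _⟩ | ⟨he, _⟩ <;>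
      rw [hsUZ, hsBZ, he] <;> ring_nf <;> ring_nf at hhigh hA2 hq2 ⊢ <;> linarith
  have hq1nn : 0 ≤ q1 := by
    rcases Nat.eq_zero_or_pos ld with h0 | h0
    · subst h0; simp at hq1; omega
    · nlinarith [hq1, (by exact_mod_cast h0 : (1 : ℤ) ≤ ld)]
  have hq2nn : 0 ≤ q2 := by nlinarith [hq2, Int.natCast_nonneg lu]
  have hBnn : 0 ≤ sBZ := le_trans hq1nn hBlo
  have hUnn : 0 ≤ sUZ := le_trans (by positivity) (le_trans (le_add_of_nonneg_left (by positivity)) hUlo)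
  -- nat versions
  obtain ⟨sBn, hsBc⟩ : ∃ s : ℕ, (s : ℤ) = sBZ := ⟨sBZ.toNat, Int.toNat_of_nonneg hBnn⟩
  obtain ⟨sUn, hsUc⟩ : ∃ s : ℕ, (s : ℤ) = sUZ := ⟨sUZ.toNat, Int.toNat_of_nonneg hUnn⟩
  -- construct the below-part
  obtain ⟨tB, htBsub, htBcard, htBsum⟩ := construct ld k1 sBn hldk1
    (by zify; rw [hsBc]; linarith)
    (by zify; rw [hsBc]; linarith)
  obtain ⟨tU, htUmem, htUcard, htUsum⟩ := construct' lu (k1 + 1) m sUn (by omega)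
    (by zify; rw [hsUc]; push_cast; linarith)
    (by zify; rw [hsUc]; linarith)
  -- assemble the Borda-value set
  set W := tB ∪ tU with hW
  have hdisj : Disjoint tB tU := by
    rw [Finset.disjoint_left]
    intro x hx hx'
    have h1 := Finset.mem_range.mp (htBsub hx)
    have h2 := (htUmem x hx').1
    omega
  have hWcard : W.card = a := by
    rw [hW, Finset.card_union_of_disjoint hdisj, htBcard, htUcard, hsum]
  have hWsum : ∑ w ∈ W, w = sBn + sUn := by
    rw [hW, Finset.sum_union hdisj, htBsum, htUsum]
  have hWlt : ∀ w ∈ W, w < m := by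
    intro w hw
    rcases Finset.mem_union.mp hw with h | h
    · have := Finset.mem_range.mp (htBsub h); omega
    · exact (htUmem w h).2
  have hWne : ∀ w ∈ W, w ≠ k1 := by
    intro w hw
    rcases Finset.mem_union.mp hw with h | h
    · have := Finset.mem_range.mp (htBsub h); omega
    · have := (htUmem w h).1; omega
  -- positions
  have hposinj : Set.InjOn (fun w => m - 1 - w) W := by
    intro x hx y hy hxy
    have := hWlt x hx; have := hWlt y hy
    simp only at hxy; omega
  set Wimg := W.image (fun w => m - 1 - w) with hWimg
  have hWimgcard : Wimg.card = a := by
    rw [hWimg, Finset.card_image_of_injOn hposinj, hWcard]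
  have hWimglt : ∀ v ∈ Wimg, v < m := by
    intro v hv
    obtain ⟨w, hw, rfl⟩ := Finset.mem_image.mp hv
    omega
  set Wf : Finset (Fin m) := Wimg.attachFin hWimglt with hWf
  have hWfcard : Wf.card = a := by rw [hWf, Finset.card_attachFin, hWimgcard]
  set p1 : Fin m := ⟨m - 1 - k1, by omega⟩ with hp1
  have hp1W : p1 ∉ Wf := by
    rw [hWf]
    intro hmem
    rw [Finset.mem_attachFin] at hmem
    obtain ⟨w, hw, hwe⟩ := Finset.mem_image.mp hmem
    have h1 := hWlt w hw; have h2 := hWne w hw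
    have : m - 1 - w = m - 1 - k1 := hwe
    omega
  have hcardsides : Am1.card = Wf.card := by rw [hA, hWfcard]
  set e0 : {x // x ∈ Am1} ≃ {y // y ∈ Wf} := Finset.equivOfCardEq hcardsides with he0
  set T := insert c1 Am1 with hT
  set Pf := insert p1 Wf with hPf
  set φ : {x // x ∈ T} ≃ {y // y ∈ Pf} :=
    (Finset.subtypeInsertEquivOption hc1).trans
      ((Equiv.optionCongr e0).trans (Finset.subtypeInsertEquivOption hp1W).symm) with hφ
  have hTcard : T.card = a + 1 := by rw [hT, Finset.card_insert_of_notMem hc1, hA]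
  have hPfcard : Pf.card = a + 1 := by
    rw [hPf, Finset.card_insert_of_notMem hp1W, hWfcard]
  have hcompl : Fintype.card {x // x ∉ T} = Fintype.card {y : Fin m // y ∉ Pf} := by
    rw [Fintype.card_subtype_compl, Fintype.card_subtype_compl,
      Fintype.card_coe, Fintype.card_coe, hTcard, hPfcard, Fintype.card_fin, ← hm]
  set ψ : {x // x ∉ T} ≃ {y : Fin m // y ∉ Pf} := Fintype.equivOfCardEq hcompl with hψ
  set O : C ≃ Fin m :=
    (Equiv.sumCompl (· ∈ T)).symm.trans
      ((Equiv.sumCongr φ ψ).trans (Equiv.sumCompl (· ∈ Pf))) with hO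
  have hOmem : ∀ x (hx : x ∈ T), O x = (φ ⟨x, hx⟩ : Fin m) := by
    intro x hx
    rw [hO]
    simp [Equiv.sumCompl_symm_apply_of_pos hx]
  have hOc1 : O c1 = p1 := by
    rw [hOmem c1 (Finset.mem_insert_self c1 Am1), hφ]
    simp [Finset.subtypeInsertEquivOption]
  have hOc : ∀ c (hc : c ∈ Am1), O c = ((e0 ⟨c, hc⟩ : {y // y ∈ Wf}) : Fin m) := by
    intro c hc
    have hne : c ≠ c1 := fun h => hc1 (h ▸ hc)
    rw [hOmem c (Finset.mem_insert_of_mem hc), hφ]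
    simp [Finset.subtypeInsertEquivOption, hne]
  refine ⟨O, ?_, ?_⟩
  · rw [borda, hOc1]
    show m - 1 - (m - 1 - k1) = k1
    omega
  · have hsum1 : bordaSum O Am1 = ∑ w ∈ W, w := by
      have e1 : ∀ c ∈ Am1, borda O c = m - 1 - (O c).val := fun c _ => rfl
      rw [bordaSum, Finset.sum_congr rfl e1]
      rw [← Finset.sum_attach Am1 (fun c => m - 1 - (O c).val)]
      have e2 : ∀ x : {x // x ∈ Am1}, m - 1 - (O x.1).val
          = m - 1 - ((e0 x : {y // y ∈ Wf}) : Fin m).val := by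
        intro x; rw [hOc x.1 x.2]
      rw [← Finset.univ_eq_attach, Finset.sum_congr rfl (fun x _ => e2 x)]
      rw [Equiv.sum_comp e0 (fun y => m - 1 - ((y : {y // y ∈ Wf}) : Fin m).val)]
      rw [Finset.univ_eq_attach, Finset.sum_attach Wf (fun p => m - 1 - p.val)]
      rw [hWf, sum_attachFin Wimg hWimglt (fun v => m - 1 - v)]
      rw [hWimg, Finset.sum_image hposinj]
      exact Finset.sum_congr rfl (fun w hw => by have := hWlt w hw; omega)
    rw [hsum1, hWsum]
    push_cast
    rw [hsBc, hsUc, hsUZ]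
    ring


/-- attainability of a pair of Borda scores `(k₁, k_A)` for `c₁` and for a
set `A₋₁` of `a` parties not containing `c₁`, characterized by the split
`ℓ↓ + ℓ↑ = a` of `A₋₁` into the parts below and above `c₁`. -/
theorem stmt_6 {C : Type*} [Fintype C] [DecidableEq C] (c1 : C) (Am1 : Finset C)
    (hc1 : c1 ∉ Am1) (a : ℕ) (hA : Am1.card = a)
    (k1 : ℕ) (kA : ℤ) (hk1 : k1 ≤ Fintype.card C - 1) :
    (∃ O : C ≃ Fin (Fintype.card C),
        borda O c1 = k1 ∧ (bordaSum O Am1 : ℤ) = kA) ↔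
      (∃ ld lu : ℕ, ld + lu = a ∧ ld ≤ k1 ∧ lu ≤ Fintype.card C - 1 - k1 ∧
        ((ld : ℤ) * ((ld : ℤ) - 1)) / 2 + (lu : ℤ) * (k1 : ℤ) +
            ((lu : ℤ) * ((lu : ℤ) + 1)) / 2 ≤ kA ∧
        kA ≤ (ld : ℤ) * (k1 : ℤ) - ((ld : ℤ) * ((ld : ℤ) + 1)) / 2 +
            (lu : ℤ) * (Fintype.card C : ℤ) - ((lu : ℤ) * ((lu : ℤ) + 1)) / 2) :=
  ⟨fwd c1 Am1 hc1 a hA k1 kA hk1, bwd c1 Am1 hc1 a hA k1 kA hk1⟩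

end Stmt6
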